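/- Any quadratic form x² + xy + ay² with 0 ≠ a ∈ 𝔽_{2^k}(t) is equivalent, via a transformation of the variable x of the form x ↦ x + g·y with g ∈ 𝔽_{2^k}(t), to a form x² + xy + a′y² in which every pole of a′ (including the pole at infinity, i.e., positive degree) has odd multiplicity. -/
import Mathlib


open Polynomial

section Aux

theorem sq_surj_char2 {R : Type*} [Field R] [Finite R] [CharP R 2] (x : R) :
    ∃ y : R, y ^ 2 = x := by
  have hinj : Function.Injective (fun y : R => y ^ 2) := by
    intro y z h
    simp only at h
    have h0 : (y + z) ^ 2 = 0 := by rw [CharTwo.add_sq, h, CharTwo.add_self_eq_zero]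
    have hyz : y + z = 0 := sq_eq_zero_iff.mp h0
    have : y = -z := eq_neg_of_add_eq_zero_left hyz
    rw [this, CharTwo.neg_eq]
  exact Finite.injective_iff_surjective.mp hinj x

theorem intDegree_frac {K : Type*} [Field K] {p q : K[X]} (hp : p ≠ 0) (hq : q ≠ 0) :
    (algebraMap K[X] (RatFunc K) p / algebraMap K[X] (RatFunc K) q).intDegree
      = (p.natDegree : ℤ) - q.natDegree := by
  set x := algebraMap K[X] (RatFunc K) p / algebraMap K[X] (RatFunc K) q with hx
  have hxne : x ≠ 0 :=
    div_ne_zero (RatFunc.algebraMap_ne_zero hp) (RatFunc.algebraMap_ne_zero hq)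
  have key : x.num * q = p * x.denom := (RatFunc.num_mul_eq_mul_denom_iff hq).mpr rfl
  rw [RatFunc.intDegree]
  exact Polynomial.natDegree_sub_eq_of_prod_eq (RatFunc.num_ne_zero hxne) x.denom_ne_zero
    hp hq key

theorem denom_add_poly {K : Type*} [Field K] (x : RatFunc K) (d : K[X]) :
    (x + algebraMap K[X] (RatFunc K) d).denom = x.denom := by
  have h1 : (x + algebraMap K[X] (RatFunc K) d).denom ∣ x.denom := by
    have := RatFunc.denom_add_dvd x (algebraMap K[X] (RatFunc K) d)
    simpa [RatFunc.denom_algebraMap] using this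
  have h2 : x.denom ∣ (x + algebraMap K[X] (RatFunc K) d).denom := by
    have := RatFunc.denom_add_dvd (x + algebraMap K[X] (RatFunc K) d)
      (algebraMap K[X] (RatFunc K) (-d))
    simp only [RatFunc.denom_algebraMap, mul_one] at this
    rwa [map_neg, add_neg_cancel_right] at this
  exact Polynomial.eq_of_monic_of_associated (RatFunc.monic_denom _) (RatFunc.monic_denom _)
    (associated_of_dvd_dvd h1 h2)

theorem monic_dvd_eq {K : Type*} [Field K] {d q : K[X]} (hd : d.Monic) (hq : q.Monic)
    (hdvd : d ∣ q) (hle : q.natDegree ≤ d.natDegree) : d = q := by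
  obtain ⟨e, he⟩ := hdvd
  have hdne : d ≠ 0 := hd.ne_zero
  have hene : e ≠ 0 := by rintro rfl; rw [mul_zero] at he; exact hq.ne_zero he
  have hdeg : q.natDegree = d.natDegree + e.natDegree := by
    rw [he, Polynomial.natDegree_mul hdne hene]
  have he0 : e.natDegree = 0 := by omega
  have hemonic : e.Monic := by
    have hl : q.leadingCoeff = d.leadingCoeff * e.leadingCoeff := by
      rw [he, Polynomial.leadingCoeff_mul]
    rw [hd.leadingCoeff, one_mul] at hl
    unfold Polynomial.Monic
    rw [← hl, hq.leadingCoeff]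
  have : e = 1 := hemonic.natDegree_eq_zero.mp he0
  rw [he, this, mul_one]

theorem frac_combine {K : Type*} [Field K] (P C T R : K) (hT : T ≠ 0) (hR : R ≠ 0) :
    P / (T * T * R) + C / T + (C / T) ^ 2 = (P + (C * T + C ^ 2) * R) / (T * T * R) := by
  have hTTR : T * T * R ≠ 0 := mul_ne_zero (mul_ne_zero hT hT) hR
  rw [eq_div_iff hTTR]
  have h1 : P / (T * T * R) * (T * T * R) = P := div_mul_cancel₀ _ hTTR
  have h2 : C / T * T = C := div_mul_cancel₀ _ hT
  calc (P / (T * T * R) + C / T + (C / T) ^ 2) * (T * T * R)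
      = P / (T * T * R) * (T * T * R) + (C / T * T) * T * R + (C / T * T) * (C / T * T) * R := by
        ring
    _ = P + C * T * R + C * C * R := by rw [h1, h2]
    _ = P + (C * T + C ^ 2) * R := by ring

theorem partA {F : Type*} [Field F] [Fintype F] [CharP F 2] :
    ∀ N : ℕ, ∀ a : RatFunc F, a.denom.natDegree ≤ N →
      ∃ g : RatFunc F, ∀ π : F[X], Irreducible π → ∀ n : ℕ,
        π ^ (2 * n) ∣ (a + g + g ^ 2).denom → ¬π ^ (2 * n + 1) ∣ (a + g + g ^ 2).denom →
        n = 0 := by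
  haveI : CharP (RatFunc F) 2 :=
    charP_of_injective_algebraMap (algebraMap F (RatFunc F)).injective 2
  intro N
  induction N using Nat.strong_induction_on with
  | _ N IH =>
    intro a hN
    by_cases hgood : ∀ π : F[X], Irreducible π → ∀ n : ℕ,
        π ^ (2 * n) ∣ a.denom → ¬π ^ (2 * n + 1) ∣ a.denom → n = 0
    · refine ⟨0, ?_⟩
      simpa using hgood
    · push_neg at hgood
      obtain ⟨π, hπ, n, h2n, hnot, hn0⟩ := hgood
      set q := a.denom with hqdef
      set p := a.num with hpdef
      have hqm : q.Monic := RatFunc.monic_denom a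
      have hqne : q ≠ 0 := hqm.ne_zero
      obtain ⟨m, rfl⟩ : ∃ m, n = m + 1 := ⟨n - 1, by omega⟩
      obtain ⟨r, hr⟩ := h2n
      have hπr : ¬ π ∣ r := by
        rintro ⟨s, hs⟩
        exact hnot ⟨s, by rw [hr, hs]; ring⟩
      have hπne : π ≠ 0 := hπ.ne_zero
      have hrne : r ≠ 0 := fun h => hqne (by rw [hr, h, mul_zero])
      -- residue field
      haveI : Fact (Irreducible π) := ⟨hπ⟩
      haveI : CharP (AdjoinRoot π) 2 :=
        charP_of_injective_algebraMap (algebraMap F (AdjoinRoot π)).injective 2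
      haveI : Module.Finite F (AdjoinRoot π) :=
        Module.Finite.of_basis (AdjoinRoot.powerBasis hπne).basis
      haveI : Finite (AdjoinRoot π) := Module.finite_of_finite F
      set mk := AdjoinRoot.mk π with hmkdef
      have hrmk : mk r ≠ 0 := by rwa [Ne, hmkdef, AdjoinRoot.mk_eq_zero]
      obtain ⟨v, hv⟩ := sq_surj_char2 (mk p * (mk r)⁻¹)
      obtain ⟨c, hc⟩ := AdjoinRoot.mk_surjective v
      have hdvd1 : π ∣ c ^ 2 * r + p := by
        rw [← AdjoinRoot.mk_eq_zero]
        have hcalc : mk (c ^ 2 * r + p) = v ^ 2 * mk r + mk p := by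
          simp [hmkdef, map_add, map_mul, map_pow, hc]
        rw [show AdjoinRoot.mk π (c ^ 2 * r + p) = mk (c ^ 2 * r + p) from rfl, hcalc, hv,
          inv_mul_cancel_right₀ hrmk, CharTwo.add_self_eq_zero]
      set φ := algebraMap F[X] (RatFunc F) with hφdef
      set g := φ c / φ (π ^ (m + 1)) with hgdef
      set p₁ := p + (c * π ^ (m + 1) + c ^ 2) * r with hp₁def
      have hφπ : φ π ≠ 0 := RatFunc.algebraMap_ne_zero hπne
      have hφq : φ q ≠ 0 := RatFunc.algebraMap_ne_zero hqne
      have hφr : φ r ≠ 0 := RatFunc.algebraMap_ne_zero hrne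
      have ht : φ (π ^ (m + 1)) ≠ 0 := RatFunc.algebraMap_ne_zero (pow_ne_zero _ hπne)
      have hA : a + g + g ^ 2 = φ p₁ / φ q := by
        have ha' : a = φ p / φ q := (RatFunc.num_div_denom a).symm
        have hqeq : φ q = φ (π ^ (m + 1)) * φ (π ^ (m + 1)) * φ r := by
          rw [← map_mul, ← map_mul]
          congr 1
          rw [hr, ← pow_add]
          ring_nf
        have hp₁eq : φ p₁ = φ p + (φ c * φ (π ^ (m + 1)) + φ c ^ 2) * φ r := by
          rw [hp₁def]
          simp only [map_add, map_mul]
          rw [show φ (c ^ 2) = φ c ^ 2 from map_pow φ c 2]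
        rw [ha', hgdef, hp₁eq, hqeq]
        exact frac_combine _ _ _ _ ht hφr
      have hπp₁ : π ∣ p₁ := by
        have hrep : p₁ = (c ^ 2 * r + p) + π * (c * π ^ m * r) := by rw [hp₁def]; ring
        rw [hrep]
        exact dvd_add hdvd1 (dvd_mul_right _ _)
      have hπq : π ∣ q := dvd_trans (dvd_pow_self π (by omega : 2 * (m + 1) ≠ 0)) ⟨r, hr⟩
      set A := a + g + g ^ 2 with hAdef
      have hdvdA : A.denom ∣ q := by rw [hA]; exact RatFunc.denom_div_dvd p₁ q
      have hlt : A.denom.natDegree < q.natDegree := by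
        rcases eq_or_ne p₁ 0 with h0 | h0
        · have hA0 : A = 0 := by rw [hA, h0, map_zero, zero_div]
          rw [hA0, RatFunc.denom_zero, Polynomial.natDegree_one]
          have hπdeg : 0 < π.natDegree :=
            Polynomial.natDegree_pos_iff_degree_pos.mpr (Polynomial.degree_pos_of_irreducible hπ)
          exact lt_of_lt_of_le hπdeg (Polynomial.natDegree_le_of_dvd hπq hqne)
        · by_contra hle
          push_neg at hle
          have heq : A.denom = q := monic_dvd_eq (RatFunc.monic_denom A) hqm hdvdA hle
          have hnum : A.num = p₁ := by
            have hmul := (RatFunc.num_mul_eq_mul_denom_iff (x := A) hqne).mpr hA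
            rw [heq] at hmul
            exact mul_right_cancel₀ hqne hmul
          have : IsUnit π :=
            (RatFunc.isCoprime_num_denom A).isUnit_of_dvd' (hnum ▸ hπp₁) (heq ▸ hπq)
          exact hπ.not_isUnit this
      obtain ⟨g', hg'⟩ := IH A.denom.natDegree (lt_of_lt_of_le hlt hN) A le_rfl
      refine ⟨g + g', ?_⟩
      have hcomb : a + (g + g') + (g + g') ^ 2 = A + g' + g' ^ 2 := by
        have h2 : (2 : RatFunc F) = 0 := CharTwo.two_eq_zero
        rw [hAdef]
        linear_combination (g * g') * h2
      rw [hcomb]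
      exact hg'

theorem partB {F : Type*} [Field F] [Fintype F] [CharP F 2] :
    ∀ N : ℕ, ∀ b : RatFunc F, b.intDegree.toNat ≤ N →
      ∃ c : F[X],
        (b + algebraMap F[X] (RatFunc F) c + algebraMap F[X] (RatFunc F) c ^ 2).denom
          = b.denom ∧
        (0 < (b + algebraMap F[X] (RatFunc F) c + algebraMap F[X] (RatFunc F) c ^ 2).intDegree →
          Odd (b + algebraMap F[X] (RatFunc F) c
            + algebraMap F[X] (RatFunc F) c ^ 2).intDegree) := by
  haveI : CharP (RatFunc F) 2 :=
    charP_of_injective_algebraMap (algebraMap F (RatFunc F)).injective 2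
  haveI : CharP F[X] 2 :=
    charP_of_injective_algebraMap (algebraMap F F[X]).injective 2
  intro N
  induction N using Nat.strong_induction_on with
  | _ N IH =>
    intro b hN
    set φ := algebraMap F[X] (RatFunc F) with hφdef
    by_cases hgood : b.intDegree ≤ 0 ∨ Odd b.intDegree
    · refine ⟨0, ?_, ?_⟩
      · simp
      · simp only [map_zero, add_zero, ne_eq, OfNat.ofNat_ne_zero, not_false_eq_true, zero_pow]
        intro hpos
        rcases hgood with h | h
        · omega
        · exact h
    · push_neg at hgood
      obtain ⟨hpos, heven'⟩ := hgood
      rw [Int.not_odd_iff_even] at heven'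
      have hbne : b ≠ 0 := by
        rintro rfl
        rw [RatFunc.intDegree_zero] at hpos
        omega
      set p := b.num with hpdef
      set q := b.denom with hqdef
      have hpne : p ≠ 0 := RatFunc.num_ne_zero hbne
      have hqm : q.Monic := RatFunc.monic_denom b
      have hqne : q ≠ 0 := hqm.ne_zero
      have hD : b.intDegree = (p.natDegree : ℤ) - q.natDegree := rfl
      obtain ⟨k, hk⟩ := heven'
      obtain ⟨mn, hmn1, hmn2⟩ : ∃ mn : ℕ, 1 ≤ mn ∧ p.natDegree = q.natDegree + 2 * mn := by
        refine ⟨k.toNat, ?_, ?_⟩ <;> omega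
      obtain ⟨s, hs⟩ := sq_surj_char2 p.leadingCoeff
      have hsne : s ≠ 0 := by
        rintro rfl
        rw [zero_pow two_ne_zero] at hs
        exact hpne (Polynomial.leadingCoeff_eq_zero.mp hs.symm)
      set c := C s * X ^ mn with hcdef
      have hc2 : c ^ 2 = C p.leadingCoeff * X ^ (2 * mn) := by
        rw [hcdef, mul_pow, ← C_pow, hs, ← pow_mul, mul_comm mn 2]
      set p₁ := p + (c + c ^ 2) * q with hp₁def
      have hφq : φ q ≠ 0 := RatFunc.algebraMap_ne_zero hqne
      have hB : b + φ c + φ c ^ 2 = φ p₁ / φ q := by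
        have hb' : b = φ p / φ q := (RatFunc.num_div_denom b).symm
        rw [hb', hp₁def]
        simp only [map_mul, map_add, map_pow]
        field_simp
        ring
      -- degree estimates
      have hdegp : p.degree = (p.natDegree : WithBot ℕ) := Polynomial.degree_eq_natDegree hpne
      have h1 : (p + c ^ 2 * q).degree < p.degree := by
        rw [← CharTwo.sub_eq_add]
        refine Polynomial.degree_sub_lt ?_ hpne ?_
        · rw [hc2, mul_assoc, Polynomial.degree_C_mul (Polynomial.leadingCoeff_ne_zero.mpr hpne),
            Polynomial.degree_mul, Polynomial.degree_X_pow,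
            hdegp, Polynomial.degree_eq_natDegree hqne, hmn2]
          push_cast
          ring
        · rw [hc2, Polynomial.leadingCoeff_mul, Polynomial.leadingCoeff_C_mul_X_pow,
            hqm.leadingCoeff, mul_one]
      have h2 : (c * q).degree < p.degree := by
        have hcq : (c * q).degree = ((mn + q.natDegree : ℕ) : WithBot ℕ) := by
          rw [hcdef, mul_assoc, Polynomial.degree_C_mul hsne, Polynomial.degree_mul,
            Polynomial.degree_X_pow, Polynomial.degree_eq_natDegree hqne]
          push_cast
          ring
        rw [hcq, hdegp]
        exact_mod_cast by omega
      have hp₁lt : p₁.degree < p.degree := by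
        have hrep : p₁ = (p + c ^ 2 * q) + c * q := by rw [hp₁def]; ring
        rw [hrep]
        exact lt_of_le_of_lt (Polynomial.degree_add_le _ _) (max_lt h1 h2)
      rcases eq_or_ne p₁ 0 with h0 | h0
      · refine ⟨c, ?_, ?_⟩
        · have hBpoly : b + φ c + φ c ^ 2 = b + φ (c + c ^ 2) := by
            rw [map_add, map_pow, add_assoc]
          rw [hBpoly]
          exact denom_add_poly b _
        · intro hpos'
          rw [hB, h0, map_zero, zero_div, RatFunc.intDegree_zero] at hpos'
          omega
      · have hp₁deg : p₁.natDegree < p.natDegree := Polynomial.natDegree_lt_natDegree h0 hp₁lt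
        have hIB : (b + φ c + φ c ^ 2).intDegree = (p₁.natDegree : ℤ) - q.natDegree := by
          rw [hB]
          exact intDegree_frac h0 hqne
        have hmeas : (b + φ c + φ c ^ 2).intDegree.toNat < N := by
          have := hN
          omega
        obtain ⟨c', hc'1, hc'2⟩ := IH _ hmeas (b + φ c + φ c ^ 2) le_rfl
        have h2' : (2 : RatFunc F) = 0 := CharTwo.two_eq_zero
        have hcomb : b + φ (c + c') + φ (c + c') ^ 2
            = (b + φ c + φ c ^ 2) + φ c' + φ c' ^ 2 := by
          simp only [map_add]
          linear_combination (φ c * φ c') * h2'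
        refine ⟨c + c', ?_, ?_⟩
        · rw [hcomb, hc'1]
          have hBpoly : b + φ c + φ c ^ 2 = b + φ (c + c ^ 2) := by
            rw [map_add, map_pow, add_assoc]
          rw [hBpoly]
          exact denom_add_poly b _
        · rw [hcomb]
          exact hc'2

end Aux

/-- Every form `x² + xy + ay²` over `𝔽_{2^k}(t)` is equivalent, via `x ↦ x + gy`
(which replaces `a` by `a' = a + g + g²`), to a minimal form: every finite pole of `a'`
has odd multiplicity, and if `a'` has positive degree then its degree is odd. -/
theorem stmt9 (F : Type*) [Field F] [Fintype F] [CharP F 2]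
    (a : RatFunc F) (ha : a ≠ 0) :
    ∃ g : RatFunc F,
      (∀ π : F[X], Irreducible π → ∀ n : ℕ,
        π^(2*n) ∣ (a + g + g^2).denom → ¬ π^(2*n+1) ∣ (a + g + g^2).denom → n = 0) ∧
      (0 < (a + g + g^2).intDegree → Odd (a + g + g^2).intDegree) := by
  haveI : CharP (RatFunc F) 2 :=
    charP_of_injective_algebraMap (algebraMap F (RatFunc F)).injective 2
  obtain ⟨g, hg⟩ := partA a.denom.natDegree a le_rfl
  obtain ⟨c, hc1, hc2⟩ := partB (a + g + g ^ 2).intDegree.toNat (a + g + g ^ 2) le_rfl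
  set φ := algebraMap F[X] (RatFunc F) with hφdef
  refine ⟨g + φ c, ?_, ?_⟩
  · have hcomb : a + (g + φ c) + (g + φ c) ^ 2 = (a + g + g ^ 2) + φ c + φ c ^ 2 := by
      have h2 : (2 : RatFunc F) = 0 := CharTwo.two_eq_zero
      linear_combination (g * φ c) * h2
    intro π hπ n hd hnd
    rw [hcomb, hc1] at hd hnd
    exact hg π hπ n hd hnd
  · have hcomb : a + (g + φ c) + (g + φ c) ^ 2 = (a + g + g ^ 2) + φ c + φ c ^ 2 := by
      have h2 : (2 : RatFunc F) = 0 := CharTwo.two_eq_zero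
      linear_combination (g * φ c) * h2
    rw [hcomb]
    exact hc2
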